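/- There exists a computable functional unit for ℕ with exactly three method operations (i.e. consisting of exactly three named method operations) that is universal. -/

import Mathlib

/-- Primitive instructions: plain basic `f.m`, positive test `+f.m`, negative test `-f.m`
(method names are natural numbers, there is a single focus `f`), forward jump `#l`,
backward jump `\l`, and the positive/negative termination instructions `!t` / `!f`. -/
inductive Instr : Type where
  | basic (m : ℕ)
  | postest (m : ℕ)
  | negtest (m : ℕ)
  | fjump (l : ℕ)
  | bjump (l : ℕ)
  | haltT
  | haltF
deriving DecidableEq

/-- A functional unit for a state space `S`: a finite, functional set of
(method name, method operation) pairs, where a method operation is a total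
function `S → Bool × S`. -/
structure FU (S : Type*) where
  carrier : Set (ℕ × (S → Bool × S))
  finite : carrier.Finite
  functional : ∀ {m : ℕ} {M M' : S → Bool × S},
    (m, M) ∈ carrier → (m, M') ∈ carrier → M = M'

/-- The interface of a functional unit: the set of method names occurring in it. -/
def FU.iface {S : Type*} (H : FU S) : Set ℕ := {m | ∃ M, (m, M) ∈ H.carrier}

/-- The method operation named `m` in `H` (an arbitrary fixed value if `m ∉ I(H)`). -/
noncomputable def FU.op {S : Type*} (H : FU S) (m : ℕ) (s : S) : Bool × S :=
  letI := Classical.propDecidable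
  if h : ∃ M, (m, M) ∈ H.carrier then h.choose s else (true, s)

/-- The restriction `⟨I, H⟩` of a functional unit to a set `I` of method names. -/
def FU.restrict {S : Type*} (H : FU S) (I : Set ℕ) : FU S where
  carrier := {p ∈ H.carrier | p.1 ∈ I}
  finite := H.finite.subset (Set.sep_subset _ _)
  functional := fun hM hM' => H.functional hM.1 hM'.1

/-- The method names used by an instruction all belong to `I`. -/
def Instr.namesIn (I : Set ℕ) : Instr → Prop
  | .basic m => m ∈ I
  | .postest m => m ∈ I
  | .negtest m => m ∈ I
  | _ => True

/-- An instruction sequence over a set `I` of method names: a finite nonempty list of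
primitive instructions whose method names belong to `I`. -/
def InstrSeqOver (I : Set ℕ) (x : List Instr) : Prop :=
  x ≠ [] ∧ ∀ u ∈ x, u.namesIn I

/-- `Exec H x i s b s'` : execution of the instruction sequence `x` on the functional
unit `H`, from (0-based) position `i` in state `s`, terminates delivering the Boolean
value `b` with final state `s'`.  (Position `i` here corresponds to the 1-based
position `i+1`; positions outside the sequence, jumps `#0`/`\0`, and infinite
executions admit no derivation, i.e. execution does not terminate.) -/
inductive Exec {S : Type*} (H : FU S) (x : List Instr) : ℕ → S → Bool → S → Prop where
  | basic {i : ℕ} {s : S} {b : Bool} {s' : S} (m : ℕ)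
      (hu : x[i]? = some (Instr.basic m))
      (h : Exec H x (i + 1) (H.op m s).2 b s') : Exec H x i s b s'
  | posT {i : ℕ} {s : S} {b : Bool} {s' : S} (m : ℕ)
      (hu : x[i]? = some (Instr.postest m)) (hr : (H.op m s).1 = true)
      (h : Exec H x (i + 1) (H.op m s).2 b s') : Exec H x i s b s'
  | posF {i : ℕ} {s : S} {b : Bool} {s' : S} (m : ℕ)
      (hu : x[i]? = some (Instr.postest m)) (hr : (H.op m s).1 = false)
      (h : Exec H x (i + 2) (H.op m s).2 b s') : Exec H x i s b s'
  | negT {i : ℕ} {s : S} {b : Bool} {s' : S} (m : ℕ)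
      (hu : x[i]? = some (Instr.negtest m)) (hr : (H.op m s).1 = true)
      (h : Exec H x (i + 2) (H.op m s).2 b s') : Exec H x i s b s'
  | negF {i : ℕ} {s : S} {b : Bool} {s' : S} (m : ℕ)
      (hu : x[i]? = some (Instr.negtest m)) (hr : (H.op m s).1 = false)
      (h : Exec H x (i + 1) (H.op m s).2 b s') : Exec H x i s b s'
  | fjump {i : ℕ} {s : S} {b : Bool} {s' : S} (l : ℕ)
      (hu : x[i]? = some (Instr.fjump l))
      (h : Exec H x (i + l) s b s') : Exec H x i s b s'
  | bjump {i : ℕ} {s : S} {b : Bool} {s' : S} (l : ℕ)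
      (hu : x[i]? = some (Instr.bjump l)) (hl : l ≤ i)
      (h : Exec H x (i - l) s b s') : Exec H x i s b s'
  | haltT {i : ℕ} {s : S} (hu : x[i]? = some Instr.haltT) : Exec H x i s true s
  | haltF {i : ℕ} {s : S} (hu : x[i]? = some Instr.haltF) : Exec H x i s false s

/-- `M` is a derived method operation of `H`: there is an instruction sequence `x`
over `I(H)` whose produced partial method operation `⌈x⌉_H` is total and equals `M`. -/
def DerivedOp {S : Type*} (H : FU S) (M : S → Bool × S) : Prop :=
  ∃ x : List Instr, InstrSeqOver H.iface x ∧ ∀ s, Exec H x 0 s (M s).1 (M s).2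

/-- `H ≤ H'` : every method operation of `H` is a derived method operation of `H'`. -/
def FU.le {S : Type*} (H H' : FU S) : Prop :=
  ∀ m M, (m, M) ∈ H.carrier → DerivedOp H' M

/-- `H ≡ H'` : `H ≤ H'` and `H' ≤ H`. -/
def FU.equiv {S : Type*} (H H' : FU S) : Prop := FU.le H H' ∧ FU.le H' H

/-- A method operation on ℕ is computable if both its components are. -/
def ComputableMO (M : ℕ → Bool × ℕ) : Prop :=
  Computable (fun n => (M n).1) ∧ Computable (fun n => (M n).2)

/-- A functional unit for ℕ is computable if all its method operations are. -/
def ComputableFU (H : FU ℕ) : Prop :=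
  ∀ m M, (m, M) ∈ H.carrier → ComputableMO M

/-! ### Construction of a universal computable functional unit with three methods -/

namespace UnivFU

open Nat.Partrec (Code)
open Nat.Partrec.Code

/-- "Pack": wraps state `n` into an initial configuration with code `0` and fuel `0`. -/
def Pop (n : ℕ) : Bool × ℕ := (true, Nat.pair 0 (Nat.pair 0 (Nat.pair n 0)))

/-- "Increment code": increments the code component of a configuration. -/
def Iop (n : ℕ) : Bool × ℕ :=
  (true, Nat.pair n.unpair.1 (Nat.pair (n.unpair.2.unpair.1 + 1) n.unpair.2.unpair.2))

/-- "Universal step": on a running configuration `pair 0 (pair e (pair s k))`, try to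
evaluate code `e` on `s` with fuel `k`; on a finished configuration `pair (t+1) (pair b v)`,
deliver the boolean `b ≠ 0` and the value `v`. -/
def Uop (n : ℕ) : Bool × ℕ :=
  if n.unpair.1 = 0 then
    Option.casesOn
      (evaln n.unpair.2.unpair.2.unpair.2 (Denumerable.ofNat Code n.unpair.2.unpair.1)
        n.unpair.2.unpair.2.unpair.1)
      (false, Nat.pair 0 (Nat.pair n.unpair.2.unpair.1
        (Nat.pair n.unpair.2.unpair.2.unpair.1 (n.unpair.2.unpair.2.unpair.2 + 1))))
      (fun r => (true, Nat.pair 1 r))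
  else if n.unpair.2.unpair.1 = 0 then (false, n.unpair.2.unpair.2)
  else (true, n.unpair.2.unpair.2)

lemma Uop_none {e s k : ℕ} (h : evaln k (Denumerable.ofNat Code e) s = none) :
    Uop (Nat.pair 0 (Nat.pair e (Nat.pair s k))) =
      (false, Nat.pair 0 (Nat.pair e (Nat.pair s (k + 1)))) := by
  simp [Uop, Nat.unpair_pair, h]

lemma Uop_some {e s k r : ℕ} (h : evaln k (Denumerable.ofNat Code e) s = some r) :
    Uop (Nat.pair 0 (Nat.pair e (Nat.pair s k))) = (true, Nat.pair 1 r) := by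
  simp [Uop, Nat.unpair_pair, h]

lemma Uop_fin1 (v : ℕ) : Uop (Nat.pair 1 (Nat.pair 1 v)) = (true, v) := by
  simp [Uop, Nat.unpair_pair]

lemma Uop_fin0 (v : ℕ) : Uop (Nat.pair 1 (Nat.pair 0 v)) = (false, v) := by
  simp [Uop, Nat.unpair_pair]

/-- The universal functional unit. -/
def Huniv : FU ℕ where
  carrier := {(0, Pop), (1, Iop), (2, Uop)}
  finite := ((Set.finite_singleton _).insert _).insert _
  functional := by
    intro m M M' hM hM'
    simp only [Set.mem_insert_iff, Set.mem_singleton_iff, Prod.mk.injEq] at hM hM'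
    rcases hM with ⟨h1, h2⟩ | ⟨h1, h2⟩ | ⟨h1, h2⟩ <;>
      rcases hM' with ⟨g1, g2⟩ | ⟨g1, g2⟩ | ⟨g1, g2⟩ <;>
      subst h2 <;> subst g2 <;> first | rfl | omega

lemma FU.op_eq {S : Type*} (H : FU S) {m : ℕ} {M : S → Bool × S}
    (h : (m, M) ∈ H.carrier) : H.op m = M := by
  funext s
  have hex : ∃ M', (m, M') ∈ H.carrier := ⟨M, h⟩
  have h1 : H.op m s = hex.choose s := by
    unfold FU.op
    rw [dif_pos hex]
  rw [h1, H.functional hex.choose_spec h]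

lemma mem0 : ((0 : ℕ), Pop) ∈ Huniv.carrier := Set.mem_insert _ _
lemma mem1 : ((1 : ℕ), Iop) ∈ Huniv.carrier := by right; left; rfl
lemma mem2 : ((2 : ℕ), Uop) ∈ Huniv.carrier := by right; right; rfl

lemma hop0 : Huniv.op 0 = Pop := FU.op_eq _ mem0
lemma hop1 : Huniv.op 1 = Iop := FU.op_eq _ mem1
lemma hop2 : Huniv.op 2 = Uop := FU.op_eq _ mem2

/-- The tail of every simulation program. -/
def tail5 : List Instr :=
  [Instr.negtest 2, Instr.bjump 1, Instr.postest 2, Instr.haltT, Instr.haltF]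

/-- The simulation program for a method operation with code `e`. -/
def prog (e : ℕ) : List Instr :=
  Instr.basic 0 :: (List.replicate e (Instr.basic 1) ++ tail5)

lemma prog_zero (e : ℕ) : (prog e)[0]? = some (Instr.basic 0) := by simp [prog]

lemma prog_I {e j : ℕ} (h : j < e) : (prog e)[j + 1]? = some (Instr.basic 1) := by
  simp [prog, List.getElem?_append, h]

lemma prog_tail (e j : ℕ) : (prog e)[e + 1 + j]? = tail5[j]? := by
  rw [show e + 1 + j = (e + j) + 1 from by omega]
  simp [prog, List.getElem?_append_right (by simp : (List.replicate e (Instr.basic 1)).length ≤ e + j)]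

lemma prog_loop (e : ℕ) : (prog e)[e + 1]? = some (Instr.negtest 2) := by
  simpa [tail5] using prog_tail e 0

lemma prog_bj (e : ℕ) : (prog e)[e + 2]? = some (Instr.bjump 1) := by
  have := prog_tail e 1; rw [show e + 1 + 1 = e + 2 from by omega] at this; simpa [tail5] using this

lemma prog_pos (e : ℕ) : (prog e)[e + 3]? = some (Instr.postest 2) := by
  have := prog_tail e 2; rw [show e + 1 + 2 = e + 3 from by omega] at this; simpa [tail5] using this

lemma prog_tt (e : ℕ) : (prog e)[e + 4]? = some Instr.haltT := by
  have := prog_tail e 3; rw [show e + 1 + 3 = e + 4 from by omega] at this; simpa [tail5] using this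

lemma prog_ff (e : ℕ) : (prog e)[e + 5]? = some Instr.haltF := by
  have := prog_tail e 4; rw [show e + 1 + 4 = e + 5 from by omega] at this; simpa [tail5] using this

/-- Finishing: once `evaln` succeeds, the program terminates correctly. -/
lemma exec_finish (e s k : ℕ) (M : ℕ → Bool × ℕ)
    (h : evaln k (Denumerable.ofNat Code e) s =
      some (Nat.pair (cond (M s).1 1 0) (M s).2)) :
    Exec Huniv (prog e) (e + 1) (Nat.pair 0 (Nat.pair e (Nat.pair s k))) (M s).1 (M s).2 := by
  have key : Exec Huniv (prog e) (e + 3)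
      (Nat.pair 1 (Nat.pair (cond (M s).1 1 0) (M s).2)) (M s).1 (M s).2 := by
    cases hb : (M s).1 with
    | true =>
      simp only [Bool.cond_true]
      refine Exec.posT 2 (prog_pos e) (by rw [hop2, Uop_fin1]) ?_
      rw [hop2, Uop_fin1, show e + 3 + 1 = e + 4 from by omega]
      exact Exec.haltT (prog_tt e)
    | false =>
      simp only [Bool.cond_false]
      refine Exec.posF 2 (prog_pos e) (by rw [hop2, Uop_fin0]) ?_
      rw [hop2, Uop_fin0, show e + 3 + 2 = e + 5 from by omega]
      exact Exec.haltF (prog_ff e)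
  refine Exec.negT 2 (prog_loop e) (by rw [hop2, Uop_some h]) ?_
  rw [hop2, Uop_some h, show e + 1 + 2 = e + 3 from by omega]
  exact key

/-- The loop terminates: from any fuel `k` with a halting witness `k₀ ≤ k + d`. -/
lemma exec_loop (e s : ℕ) (M : ℕ → Bool × ℕ) (k₀ : ℕ)
    (hk₀ : evaln k₀ (Denumerable.ofNat Code e) s =
      some (Nat.pair (cond (M s).1 1 0) (M s).2)) :
    ∀ d k, k₀ ≤ k + d →
      Exec Huniv (prog e) (e + 1) (Nat.pair 0 (Nat.pair e (Nat.pair s k))) (M s).1 (M s).2 := by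
  intro d
  induction d with
  | zero =>
    intro k hk
    simp only [Nat.add_zero] at hk
    exact exec_finish e s k M (evaln_mono hk hk₀)
  | succ d ih =>
    intro k hk
    cases hev : evaln k (Denumerable.ofNat Code e) s with
    | some r =>
      have h1 : r ∈ evaln (max k k₀) (Denumerable.ofNat Code e) s :=
        evaln_mono (le_max_left _ _) hev
      have h2 : Nat.pair (cond (M s).1 1 0) (M s).2 ∈
          evaln (max k k₀) (Denumerable.ofNat Code e) s :=
        evaln_mono (le_max_right _ _) hk₀
      rw [Option.mem_def] at h1 h2
      have hr : r = Nat.pair (cond (M s).1 1 0) (M s).2 := by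
        have := h1.symm.trans h2
        exact Option.some.inj this
      exact exec_finish e s k M (hr ▸ hev)
    | none =>
      apply Exec.negF 2 (prog_loop e) (by rw [hop2, Uop_none hev])
      rw [hop2, Uop_none hev, show e + 1 + 1 = e + 2 from by omega]
      apply Exec.bjump 1 (prog_bj e) (by omega)
      rw [show e + 2 - 1 = e + 1 from by omega]
      exact ih (k + 1) (by omega)

/-- Building phase: the `e` copies of `I` build the code `e` into the configuration. -/
lemma exec_build (e s : ℕ) (b : Bool) (v : ℕ)
    (hloop : Exec Huniv (prog e) (e + 1) (Nat.pair 0 (Nat.pair e (Nat.pair s 0))) b v) :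
    ∀ i, i ≤ e →
      Exec Huniv (prog e) (e - i + 1) (Nat.pair 0 (Nat.pair (e - i) (Nat.pair s 0))) b v := by
  intro i
  induction i with
  | zero => intro _; simpa using hloop
  | succ i ih =>
    intro hie
    have hi : i ≤ e := Nat.le_of_succ_le hie
    have hlt : e - (i + 1) < e := by omega
    apply Exec.basic 1 (prog_I hlt)
    rw [hop1]
    have hst : (Iop (Nat.pair 0 (Nat.pair (e - (i + 1)) (Nat.pair s 0)))).2 =
        Nat.pair 0 (Nat.pair (e - i) (Nat.pair s 0)) := by
      simp only [Iop, Nat.unpair_pair]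
      rw [show e - (i + 1) + 1 = e - i from by omega]
    rw [hst, show e - (i + 1) + 1 + 1 = e - i + 1 from by omega]
    exact ih hi

/-- Primitive recursiveness of the three method operations. -/
lemma primrec_Pop : Primrec Pop :=
  (Primrec.const true).pair <| Primrec₂.natPair.comp (Primrec.const 0) <|
    Primrec₂.natPair.comp (Primrec.const 0) <|
      Primrec₂.natPair.comp Primrec.id (Primrec.const 0)

section PrimrecAux

private def u1 : Primrec fun n : ℕ => n.unpair.1 := Primrec.fst.comp Primrec.unpair
private def u2 : Primrec fun n : ℕ => n.unpair.2 := Primrec.snd.comp Primrec.unpair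
private def u21 : Primrec fun n : ℕ => n.unpair.2.unpair.1 :=
  Primrec.fst.comp (Primrec.unpair.comp u2)
private def u22 : Primrec fun n : ℕ => n.unpair.2.unpair.2 :=
  Primrec.snd.comp (Primrec.unpair.comp u2)
private def u221 : Primrec fun n : ℕ => n.unpair.2.unpair.2.unpair.1 :=
  Primrec.fst.comp (Primrec.unpair.comp u22)
private def u222 : Primrec fun n : ℕ => n.unpair.2.unpair.2.unpair.2 :=
  Primrec.snd.comp (Primrec.unpair.comp u22)

lemma primrec_Iop : Primrec Iop :=
  (Primrec.const true).pair <| Primrec₂.natPair.comp u1 <|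
    Primrec₂.natPair.comp (Primrec.succ.comp u21) u22

lemma primrec_Uop : Primrec Uop := by
  have hcode : Primrec fun n : ℕ => Denumerable.ofNat Code n.unpair.2.unpair.1 :=
    (Primrec.ofNat Code).comp u21
  have hev : Primrec fun n : ℕ =>
      evaln n.unpair.2.unpair.2.unpair.2 (Denumerable.ofNat Code n.unpair.2.unpair.1)
        n.unpair.2.unpair.2.unpair.1 :=
    primrec_evaln.comp <| ((u222.pair hcode).pair u221)
  refine Primrec.ite (Primrec.eq.comp u1 (Primrec.const 0)) ?_ ?_
  · refine Primrec.option_casesOn hev ?_ ?_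
    · exact (Primrec.const false).pair <| Primrec₂.natPair.comp (Primrec.const 0) <|
        Primrec₂.natPair.comp u21 <|
          Primrec₂.natPair.comp u221 (Primrec.succ.comp u222)
    · exact (Primrec.const true).pair
        (Primrec₂.natPair.comp (Primrec.const 1) Primrec.snd)
  · exact Primrec.ite (Primrec.eq.comp u21 (Primrec.const 0))
      ((Primrec.const false).pair u22) ((Primrec.const true).pair u22)

end PrimrecAux

lemma computableMO_of_primrec {M : ℕ → Bool × ℕ} (h : Primrec M) : ComputableMO M :=
  ⟨(Primrec.fst.comp h).to_comp, (Primrec.snd.comp h).to_comp⟩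

end UnivFU

/-- There exists a universal computable functional unit for ℕ with exactly three
named method operations. -/
theorem exists_universal_computable_fu_three :
    ∃ H : FU ℕ, ComputableFU H ∧ H.carrier.ncard = 3 ∧
      ∀ L : FU ℕ, ComputableFU L → FU.le L H := by
  classical
  open UnivFU Nat.Partrec.Code in
  refine ⟨Huniv, ?_, ?_, ?_⟩
  · -- computability
    intro m M hM
    simp only [Huniv, Set.mem_insert_iff, Set.mem_singleton_iff, Prod.mk.injEq] at hM
    rcases hM with ⟨-, rfl⟩ | ⟨-, rfl⟩ | ⟨-, rfl⟩
    · exact computableMO_of_primrec primrec_Pop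
    · exact computableMO_of_primrec primrec_Iop
    · exact computableMO_of_primrec primrec_Uop
  · -- cardinality
    show ({(0, Pop), (1, Iop), (2, Uop)} : Set (ℕ × (ℕ → Bool × ℕ))).ncard = 3
    rw [Set.ncard_insert_of_notMem (by simp [Prod.ext_iff])
        ((Set.finite_singleton _).insert _),
      Set.ncard_pair (by simp [Prod.ext_iff])]
  · -- universality
    intro L hL m M hM
    obtain ⟨hMr, hMe⟩ := hL m M hM
    have hg : Computable fun n => Nat.pair (cond (M n).1 1 0) (M n).2 :=
      Primrec₂.natPair.to_comp.comp (Computable.cond hMr (Computable.const 1)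
        (Computable.const 0)) hMe
    have hpg : Nat.Partrec fun n => Part.some (Nat.pair (cond (M n).1 1 0) (M n).2) :=
      Partrec.nat_iff.1 hg.partrec
    obtain ⟨c, hc⟩ := exists_code.1 hpg
    set e := Encodable.encode c with he
    refine ⟨prog e, ⟨by simp [prog], ?_⟩, ?_⟩
    · -- all names in the interface
      intro u hu
      have h0 : (0 : ℕ) ∈ Huniv.iface := ⟨Pop, mem0⟩
      have h1 : (1 : ℕ) ∈ Huniv.iface := ⟨Iop, mem1⟩
      have h2 : (2 : ℕ) ∈ Huniv.iface := ⟨Uop, mem2⟩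
      simp only [prog, tail5, List.mem_cons, List.mem_append, List.mem_replicate,
        List.not_mem_nil, or_false] at hu
      rcases hu with rfl | ⟨_, rfl⟩ | rfl | rfl | rfl | rfl | rfl <;>
        simp [Instr.namesIn, h0, h1, h2]
    · -- execution is correct
      intro s
      have hmem : Nat.pair (cond (M s).1 1 0) (M s).2 ∈ eval c s := by
        rw [hc]; exact Part.mem_some _
      obtain ⟨k₀, hk₀⟩ := evaln_complete.1 hmem
      rw [Option.mem_def] at hk₀
      rw [← Denumerable.ofNat_encode c, ← he] at hk₀
      have hloop := exec_loop e s M k₀ hk₀ k₀ 0 (by omega)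
      have hbuild := exec_build e s (M s).1 (M s).2 hloop e le_rfl
      rw [Nat.sub_self] at hbuild
      apply Exec.basic 0 (prog_zero e)
      rw [hop0]
      exact hbuild
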